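/- Let 1 ≤ k < n be coprime, with Hirzebruch–Jung continued fraction expansions n/k = [n_1,...,n_p] and n/(n−k) = [n_1',...,n_{p'}']. Then n_1' + ⋯ + n_{p'}' = 2(n_1 + ⋯ + n_p) − 3p + 1. -/

import Mathlib

/-- Evaluation of the Hirzebruch–Jung ("negative") continued fraction
`[n₁,…,n_p] = n₁ − 1/(n₂ − 1/(⋯ − 1/n_p))` as a rational number. -/
def hjEval : List ℤ → ℚ
  | [] => 0
  | [a] => (a : ℚ)
  | a :: b :: l => (a : ℚ) - 1 / hjEval (b :: l)

lemma hjEval_cons (a : ℤ) (T : List ℤ) (hT : T ≠ []) :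
    hjEval (a :: T) = (a : ℚ) - 1 / hjEval T := by
  cases T with
  | nil => exact absurd rfl hT
  | cons b l => rfl

lemma one_lt_hjEval : ∀ (L : List ℤ), L ≠ [] → (∀ a ∈ L, 2 ≤ a) → 1 < hjEval L
  | [], h, _ => absurd rfl h
  | [a], _, h2 => by
      have ha : (2:ℚ) ≤ (a:ℚ) := by exact_mod_cast h2 a (by simp)
      show (1:ℚ) < a
      linarith
  | a :: b :: l, _, h2 => by
      have ih : 1 < hjEval (b :: l) :=
        one_lt_hjEval (b :: l) (by simp) (fun x hx => h2 x (List.mem_cons_of_mem _ hx))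
      have ha : (2:ℚ) ≤ (a:ℚ) := by exact_mod_cast h2 a (by simp)
      have h0 : 0 < hjEval (b :: l) := lt_trans one_pos ih
      have h1 : 1 / hjEval (b :: l) < 1 := by rw [div_lt_one h0]; exact ih
      show (a:ℚ) - 1 / hjEval (b :: l) > 1
      linarith

lemma hjEval_pos (L : List ℤ) (hL : L ≠ []) (h2 : ∀ a ∈ L, 2 ≤ a) : 0 < hjEval L :=
  lt_trans one_pos (one_lt_hjEval L hL h2)

lemma hjEval_head_lt (a : ℤ) (T : List ℤ) (h2 : ∀ x ∈ T, 2 ≤ x) :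
    (a:ℚ) - 1 < hjEval (a :: T) := by
  cases T with
  | nil => show (a:ℚ) - 1 < (a:ℚ); linarith
  | cons b l =>
      have ih : 1 < hjEval (b :: l) := one_lt_hjEval (b :: l) (by simp) h2
      have h0 : 0 < hjEval (b :: l) := lt_trans one_pos ih
      have h1 : 1 / hjEval (b :: l) < 1 := by rw [div_lt_one h0]; exact ih
      show (a:ℚ) - 1 < (a:ℚ) - 1 / hjEval (b :: l)
      linarith

lemma hjEval_le_head (a : ℤ) (T : List ℤ) (h2 : ∀ x ∈ T, 2 ≤ x) :
    hjEval (a :: T) ≤ (a:ℚ) := by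
  cases T with
  | nil => exact le_refl _
  | cons b l =>
      have ih : 1 < hjEval (b :: l) := one_lt_hjEval (b :: l) (by simp) h2
      have h0 : 0 < hjEval (b :: l) := lt_trans one_pos ih
      have h1 : 0 < 1 / hjEval (b :: l) := by positivity
      show (a:ℚ) - 1 / hjEval (b :: l) ≤ (a:ℚ)
      linarith

lemma hjEval_lt_head (a : ℤ) (T : List ℤ) (hT : T ≠ []) (h2 : ∀ x ∈ T, 2 ≤ x) :
    hjEval (a :: T) < (a:ℚ) := by
  cases T with
  | nil => exact absurd rfl hT
  | cons b l =>
      have ih : 1 < hjEval (b :: l) := one_lt_hjEval (b :: l) (by simp) h2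
      have h0 : 0 < hjEval (b :: l) := lt_trans one_pos ih
      have h1 : 0 < 1 / hjEval (b :: l) := by positivity
      show (a:ℚ) - 1 / hjEval (b :: l) < (a:ℚ)
      linarith

lemma hjEval_shift (a : ℤ) (T : List ℤ) :
    hjEval ((a - 1) :: T) = hjEval (a :: T) - 1 := by
  cases T with
  | nil => show ((a - 1 : ℤ) : ℚ) = (a:ℚ) - 1; push_cast; ring
  | cons b l =>
      show ((a - 1 : ℤ) : ℚ) - 1 / hjEval (b :: l) = ((a:ℚ) - 1 / hjEval (b :: l)) - 1
      push_cast; ring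

lemma cop_aux {n k : ℕ} (h1 : n ≤ 2 * k) (h2 : k ≤ n) (hco : Nat.Coprime n k) :
    Nat.Coprime k (2 * k - n) := by
  rw [← Nat.isCoprime_iff_coprime] at hco ⊢
  have hcast : ((2 * k - n : ℕ) : ℤ) = (-(n:ℤ)) + (k:ℤ) * 2 := by
    push_cast [Nat.cast_sub h1]; ring
  rw [hcast]
  exact (hco.symm.neg_right).add_mul_left_right 2

lemma hj_key : ∀ n : ℕ, ∀ k : ℕ, ∀ L L' : List ℤ, 1 ≤ k → k < n → Nat.Coprime n k →
    L ≠ [] → L' ≠ [] → (∀ a ∈ L, 2 ≤ a) → (∀ a ∈ L', 2 ≤ a) →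
    hjEval L = (n : ℚ) / (k : ℚ) → hjEval L' = (n : ℚ) / ((n : ℚ) - (k : ℚ)) →
    L'.sum = 2 * L.sum - 3 * L.length + 1 := by
  intro n
  induction n using Nat.strong_induction_on with
  | _ n IH =>
  intro k L L' hk hkn hco hL hL' h2 h2' hval hval'
  have hKpos : (0:ℚ) < (k:ℚ) := by exact_mod_cast hk
  have hNK : (k:ℚ) < (n:ℚ) := by exact_mod_cast hkn
  have hNKpos : (0:ℚ) < (n:ℚ) - (k:ℚ) := by linarith
  obtain ⟨a, T, rfl⟩ : ∃ a T, L = a :: T := by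
    cases L with
    | nil => exact absurd rfl hL
    | cons a T => exact ⟨a, T, rfl⟩
  obtain ⟨a', T', rfl⟩ : ∃ a T, L' = a :: T := by
    cases L' with
    | nil => exact absurd rfl hL'
    | cons a T => exact ⟨a, T, rfl⟩
  have h2T : ∀ x ∈ T, 2 ≤ x := fun x hx => h2 x (List.mem_cons_of_mem _ hx)
  have h2T' : ∀ x ∈ T', 2 ≤ x := fun x hx => h2' x (List.mem_cons_of_mem _ hx)
  have ha2 : 2 ≤ a := h2 a (by simp)
  have ha2' : 2 ≤ a' := h2' a' (by simp)
  rcases lt_trichotomy n (2 * k) with hlt | heq | hgt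
  · -- n < 2k : L = 2 :: T, T ≠ []
    have hk2 : 2 ≤ k := by omega
    have hlt' : (n:ℚ) < 2 * (k:ℚ) := by exact_mod_cast hlt
    -- n/k < 2
    have hv2 : hjEval (a :: T) < 2 := by
      rw [hval, div_lt_iff₀ hKpos]; linarith
    have hTne : T ≠ [] := by
      intro h; subst h
      have : hjEval [a] = (a:ℚ) := rfl
      rw [this] at hv2
      have : (2:ℚ) ≤ (a:ℚ) := by exact_mod_cast ha2
      linarith
    have haeq : a = 2 := by
      have := hjEval_head_lt a T h2T
      rw [hval] at this
      have hb : (a:ℚ) - 1 < 2 := by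
        have : (n:ℚ)/(k:ℚ) < 2 := by rw [div_lt_iff₀ hKpos]; linarith
        linarith
      have : a < 3 := by exact_mod_cast (by linarith : (a:ℚ) < 3)
      omega
    subst haeq
    -- value of T : k/(2k - n)
    have hTpos : 0 < hjEval T := hjEval_pos T hTne h2T
    have heqT : hjEval (2 :: T) = (2:ℚ) - 1 / hjEval T := hjEval_cons 2 T hTne
    have h2kn : (0:ℚ) < 2 * (k:ℚ) - (n:ℚ) := by linarith
    have hvalT : hjEval T = (k:ℚ) / (2 * (k:ℚ) - (n:ℚ)) := by
      rw [hval] at heqT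
      have hTne0 : hjEval T ≠ 0 := ne_of_gt hTpos
      field_simp at heqT ⊢
      rw [eq_div_iff (ne_of_gt (by linarith))]
      linarith [heqT]
    -- L' head ≥ 3
    have hv2' : 2 < hjEval (a' :: T') := by
      rw [hval', lt_div_iff₀ hNKpos]; linarith
    have ha3' : 3 ≤ a' := by
      have hle := hjEval_le_head a' T' h2T'
      have hq : (2:ℚ) < (a':ℚ) := lt_of_lt_of_le hv2' hle
      have hz : (2:ℤ) < a' := by exact_mod_cast hq
      omega
    -- shifted L'
    have hshift : hjEval ((a' - 1) :: T') = (k:ℚ) / ((n:ℚ) - (k:ℚ)) := by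
      rw [hjEval_shift, hval']
      field_simp
      ring
    -- apply IH at (k, 2k - n)
    have hcast1 : ((2 * k - n : ℕ) : ℚ) = 2 * (k:ℚ) - (n:ℚ) := by
      push_cast [Nat.cast_sub hlt.le]; ring
    have hIH := IH k hkn (2 * k - n) T ((a' - 1) :: T')
      (by omega) (by omega) (cop_aux hlt.le hkn.le hco)
      hTne (by simp) h2T
      (by
        intro x hx
        rcases List.mem_cons.1 hx with h | h
        · subst h; omega
        · exact h2T' x h)
      (by rw [hvalT, hcast1])
      (by
        rw [hshift, hcast1]
        congr 1
        push_cast [Nat.cast_sub hlt.le]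
        ring)
    -- conclude
    simp only [List.sum_cons, List.length_cons] at hIH ⊢
    push_cast at hIH ⊢
    linarith [hIH]
  · -- n = 2k : k = 1, n = 2
    have hk1 : k = 1 := by
      have hdvd : k ∣ n := ⟨2, by omega⟩
      exact Nat.Coprime.eq_one_of_dvd hco.symm hdvd
    have hn2 : n = 2 := by omega
    subst hk1; subst hn2
    have hval2 : hjEval (a :: T) = 2 := by rw [hval]; norm_num
    have hval2' : hjEval (a' :: T') = 2 := by rw [hval']; norm_num
    have hTnil : T = [] := by
      by_contra h
      have hlt := hjEval_lt_head a T h h2T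
      have hgt := hjEval_head_lt a T h2T
      rw [hval2] at hlt hgt
      have hz1 : (2:ℤ) < a := by exact_mod_cast hlt
      have hz2 : a < 3 := by exact_mod_cast (by linarith : (a:ℚ) < 3)
      omega
    have hTnil' : T' = [] := by
      by_contra h
      have hlt := hjEval_lt_head a' T' h h2T'
      have hgt := hjEval_head_lt a' T' h2T'
      rw [hval2'] at hlt hgt
      have hz1 : (2:ℤ) < a' := by exact_mod_cast hlt
      have hz2 : a' < 3 := by exact_mod_cast (by linarith : (a':ℚ) < 3)
      omega
    subst hTnil; subst hTnil'
    have : (a:ℚ) = 2 := hval2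
    have haa : a = 2 := by exact_mod_cast this
    have : (a':ℚ) = 2 := hval2'
    have haa' : a' = 2 := by exact_mod_cast this
    subst haa; subst haa'
    simp
  · -- 2k < n : head of L ≥ 3, L' = 2 :: T', T' ≠ []
    have hgt' : 2 * (k:ℚ) < (n:ℚ) := by exact_mod_cast hgt
    have hv2 : 2 < hjEval (a :: T) := by
      rw [hval, lt_div_iff₀ hKpos]; linarith
    have ha3 : 3 ≤ a := by
      have hle := hjEval_le_head a T h2T
      have : (2:ℚ) < (a:ℚ) := lt_of_lt_of_le hv2 hle
      have : (2:ℤ) < a := by exact_mod_cast this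
      omega
    -- L' analysis: 1 < n/(n-k) < 2
    have hv2' : hjEval (a' :: T') < 2 := by
      rw [hval', div_lt_iff₀ hNKpos]; linarith
    have hTne' : T' ≠ [] := by
      intro h; subst h
      have : hjEval [a'] = (a':ℚ) := rfl
      rw [this] at hv2'
      have : (2:ℚ) ≤ (a':ℚ) := by exact_mod_cast ha2'
      linarith
    have haeq' : a' = 2 := by
      have := hjEval_head_lt a' T' h2T'
      have hb : (a':ℚ) - 1 < 2 := by linarith
      have : (a':ℚ) < 3 := by linarith
      have : a' < 3 := by exact_mod_cast this
      omega
    subst haeq'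
    have hT'pos : 0 < hjEval T' := hjEval_pos T' hTne' h2T'
    have heqT' : hjEval ((2:ℤ) :: T') = (2:ℚ) - 1 / hjEval T' := hjEval_cons 2 T' hTne'
    have hn2k : (0:ℚ) < (n:ℚ) - 2 * (k:ℚ) := by linarith
    have hvalT' : hjEval T' = ((n:ℚ) - (k:ℚ)) / ((n:ℚ) - 2 * (k:ℚ)) := by
      rw [hval'] at heqT'
      have hTne0 : hjEval T' ≠ 0 := ne_of_gt hT'pos
      have hNK0 : (n:ℚ) - (k:ℚ) ≠ 0 := ne_of_gt hNKpos
      field_simp at heqT' ⊢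
      rw [eq_div_iff (ne_of_gt (by linarith))]
      linarith [heqT']
    have hshift : hjEval ((a - 1) :: T) = ((n:ℚ) - (k:ℚ)) / (k:ℚ) := by
      rw [hjEval_shift, hval]
      field_simp
    have hcast1 : ((n - k : ℕ) : ℚ) = (n:ℚ) - (k:ℚ) := by
      push_cast [Nat.cast_sub hkn.le]; ring
    have hcop : Nat.Coprime (n - k) k := (Nat.coprime_sub_self_left hkn.le).mpr hco
    have hIH := IH (n - k) (by omega) k ((a - 1) :: T) T'
      hk (by omega) hcop (by simp) hTne'
      (by
        intro x hx
        rcases List.mem_cons.1 hx with h | h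
        · subst h; omega
        · exact h2T x h)
      h2T'
      (by rw [hshift, hcast1])
      (by
        rw [hvalT', hcast1]
        ring_nf)
    simp only [List.sum_cons, List.length_cons] at hIH ⊢
    push_cast at hIH ⊢
    linarith [hIH]

/-- If `n/k = [n₁,…,n_p]` and `n/(n−k) = [n₁',…,n_{p'}']` are the Hirzebruch–Jung
continued fraction expansions (all entries ≥ 2) for coprime `1 ≤ k < n`, then
`n₁' + ⋯ + n_{p'}' = 2(n₁ + ⋯ + n_p) − 3p + 1`. -/
theorem hj_dual_sum (n k : ℕ) (hk : 1 ≤ k) (hkn : k < n) (hco : Nat.Coprime n k)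
    (L L' : List ℤ) (hL : L ≠ []) (hL' : L' ≠ [])
    (h2 : ∀ a ∈ L, 2 ≤ a) (h2' : ∀ a ∈ L', 2 ≤ a)
    (hval : hjEval L = (n : ℚ) / (k : ℚ))
    (hval' : hjEval L' = (n : ℚ) / ((n : ℚ) - (k : ℚ))) :
    L'.sum = 2 * L.sum - 3 * L.length + 1 :=
  hj_key n k L L' hk hkn hco hL hL' h2 h2' hval hval'
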